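/- For every functor F in A = Fun(C, G), the canonical morphism φ_F : F → F^{++} is a pure monomorphism and F^{++} is a pure injective functor; consequently, every functor in A has a pure injective preenvelope. -/

import Mathlib

set_option linter.unusedSectionVars false

open CategoryTheory CategoryTheory.Limits CategoryTheory.MonoidalCategory
  CategoryTheory.MonoidalClosed

universe v u

namespace FlatFunctorsPaper

variable {G : Type u} [Category.{v} G] [Abelian G] [MonoidalCategory G]
  [SymmetricCategory G] [MonoidalClosed G] [MonoidalPreadditive G]

/-- `X⁺ = [X, J]`, the internal hom into `J`. -/
noncomputable def pObj (J X : G) : G := (ihom X).obj J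

/-- The contravariant functorial action of `(-)⁺ = [-, J]`. -/
noncomputable def pMap (J : G) {X Y : G} (f : X ⟶ Y) : pObj J Y ⟶ pObj J X :=
  (MonoidalClosed.pre f).app J

@[simp] lemma pMap_id (J X : G) : pMap J (𝟙 X) = 𝟙 (pObj J X) := by
  simp [pMap, pObj]

@[simp] lemma pMap_comp (J : G) {X Y Z : G} (f : X ⟶ Y) (g : Y ⟶ Z) :
    pMap J (f ≫ g) = pMap J g ≫ pMap J f := by
  simp [pMap, pObj]

@[simp] lemma pMap_zero (J : G) (X Y : G) : pMap J (0 : X ⟶ Y) = 0 := by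
  apply MonoidalClosed.uncurry_injective
  unfold pObj
  rw [pMap, MonoidalClosed.uncurry_pre, MonoidalClosed.uncurry_eq]
  simp

/-- The canonical biduality morphism `X ⟶ X⁺⁺` in `G`. -/
noncomputable def bid (J X : G) : X ⟶ pObj J (pObj J X) :=
  MonoidalClosed.curry ((β_ (pObj J X) X).hom ≫ (ihom.ev X).app J)

lemma bid_natural (J : G) {X Y : G} (f : X ⟶ Y) :
    f ≫ bid J Y = bid J X ≫ pMap J (pMap J f) := by
  show f ≫ (MonoidalClosed.curry ((β_ ((ihom Y).obj J) Y).hom ≫ (ihom.ev Y).app J) :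
      Y ⟶ (ihom ((ihom Y).obj J)).obj J) =
    MonoidalClosed.curry ((β_ ((ihom X).obj J) X).hom ≫ (ihom.ev X).app J) ≫
      (MonoidalClosed.pre ((MonoidalClosed.pre f).app J)).app J
  apply MonoidalClosed.uncurry_injective
  rw [MonoidalClosed.uncurry_natural_left, MonoidalClosed.uncurry_natural_left]
  rw [MonoidalClosed.uncurry_curry, MonoidalClosed.uncurry_pre]
  erw [whisker_exchange_assoc]
  erw [← MonoidalClosed.uncurry_eq, MonoidalClosed.uncurry_curry]
  simp

section Dual

variable {D : Type v} [SmallCategory D]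

/-- The objectwise dual `F⁺` of a functor `F : D ⥤ G`, a functor `Dᵒᵖ ⥤ G`. -/
@[simps] noncomputable def dObj (J : G) (F : D ⥤ G) : Dᵒᵖ ⥤ G where
  obj c := pObj J (F.obj c.unop)
  map f := pMap J (F.map f.unop)
  map_id c := by simp
  map_comp f g := by simp

/-- The dual of a natural transformation. -/
@[simps] noncomputable def dMap (J : G) {F F' : D ⥤ G} (η : F ⟶ F') :
    dObj J F' ⟶ dObj J F where
  app c := pMap J (η.app c.unop)
  naturality _ _ f := by
    erw [dObj_map, dObj_map, ← pMap_comp, ← pMap_comp, NatTrans.naturality]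

@[simp] lemma dMap_id (J : G) (F : D ⥤ G) : dMap J (𝟙 F) = 𝟙 (dObj J F) := by
  ext c; simp; rfl

@[simp] lemma dMap_comp (J : G) {F F' F'' : D ⥤ G} (α : F ⟶ F') (β : F' ⟶ F'') :
    dMap J (α ≫ β) = dMap J β ≫ dMap J α := by
  ext c; simp; rfl

@[simp] lemma dMap_zero (J : G) (F F' : D ⥤ G) : dMap J (0 : F ⟶ F') = 0 := by
  ext c; simp; rfl

/-- The double dual `F⁺⁺` of a functor `F : D ⥤ G`. -/
noncomputable def ddObj (J : G) (F : D ⥤ G) : D ⥤ G := opOp D ⋙ dObj J (dObj J F)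

/-- The canonical natural transformation `φ_F : F ⟶ F⁺⁺`. -/
noncomputable def phi (J : G) (F : D ⥤ G) : F ⟶ ddObj J F where
  app c := bid J (F.obj c)
  naturality _ _ f := bid_natural J (F.map f)

/-- The dual of a short exact sequence (short complex) of functors. -/
noncomputable def dSC (J : G) (S : ShortComplex (D ⥤ G)) : ShortComplex (Dᵒᵖ ⥤ G) :=
  ShortComplex.mk (dMap J S.g) (dMap J S.f) (by rw [← dMap_comp, S.zero, dMap_zero])

/-- A short exact sequence of functors is *pure* if its dual splits. -/
def IsPure (J : G) (S : ShortComplex (D ⥤ G)) : Prop := Nonempty ((dSC J S).Splitting)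

/-- A functor `F` is *flat* if every short exact sequence ending in `F` is pure. -/
def IsFlat (J : G) (F : D ⥤ G) : Prop :=
  ∀ ⦃K E : D ⥤ G⦄ (i : K ⟶ E) (p : E ⟶ F) (w : i ≫ p = 0),
    (ShortComplex.mk i p w).ShortExact → IsPure J (ShortComplex.mk i p w)

/-- A functor `X` is *cotorsion* if every short exact sequence `0 → X → E → F → 0`
with `F` flat splits. -/
def IsCotorsion (J : G) (X : D ⥤ G) : Prop :=
  ∀ ⦃E F : D ⥤ G⦄ (i : X ⟶ E) (p : E ⟶ F) (w : i ≫ p = 0),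
    (ShortComplex.mk i p w).ShortExact → IsFlat J F →
      Nonempty (ShortComplex.mk i p w).Splitting

/-- A functor `P` is *pure injective* if every morphism into `P` extends along
pure monomorphisms. -/
def IsPureInjective (J : G) (P : D ⥤ G) : Prop :=
  ∀ ⦃K E L : D ⥤ G⦄ (i : K ⟶ E) (p : E ⟶ L) (w : i ≫ p = 0),
    (ShortComplex.mk i p w).ShortExact → IsPure J (ShortComplex.mk i p w) →
      ∀ f : K ⟶ P, ∃ h : E ⟶ P, i ≫ h = f

end Dual

section ObjectLevel

/-- The dual of a short exact sequence (short complex) in `G`. -/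
noncomputable def dSCG (J : G) (S : ShortComplex G) : ShortComplex G :=
  ShortComplex.mk (pMap J S.g) (pMap J S.f) (by rw [← pMap_comp, S.zero, pMap_zero])

/-- A short exact sequence in `G` is *pure* if its dual splits. -/
def IsPureG (J : G) (S : ShortComplex G) : Prop := Nonempty ((dSCG J S).Splitting)

/-- An object `X` of `G` is *flat* if every short exact sequence ending in `X` is pure. -/
def IsFlatG (J X : G) : Prop :=
  ∀ ⦃K E : G⦄ (i : K ⟶ E) (p : E ⟶ X) (w : i ≫ p = 0),
    (ShortComplex.mk i p w).ShortExact → IsPureG J (ShortComplex.mk i p w)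

/-- An object `X` of `G` is *cotorsion* if every short exact sequence
`0 → X → E → F → 0` with `F` flat splits. -/
def IsCotorsionG (J X : G) : Prop :=
  ∀ ⦃E F : G⦄ (i : X ⟶ E) (p : E ⟶ F) (w : i ≫ p = 0),
    (ShortComplex.mk i p w).ShortExact → IsFlatG J F →
      Nonempty (ShortComplex.mk i p w).Splitting

/-- The flat objects and the cotorsion objects form a complete cotorsion theory in `G`:
every object has a special flat precover and a special cotorsion preenvelope. -/
def CompleteFlatCotorsionTheoryG (J : G) : Prop :=
  ∀ X : G,
    (∃ (Cx F : G) (i : Cx ⟶ F) (p : F ⟶ X) (w : i ≫ p = 0),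
      (ShortComplex.mk i p w).ShortExact ∧ IsFlatG J F ∧ IsCotorsionG J Cx) ∧
    (∃ (Cx F : G) (i : X ⟶ Cx) (p : Cx ⟶ F) (w : i ≫ p = 0),
      (ShortComplex.mk i p w).ShortExact ∧ IsCotorsionG J Cx ∧ IsFlatG J F)

end ObjectLevel

section Complexes

variable {D : Type v} [SmallCategory D]

/-- A *flat complex*: an acyclic complex of flat functors all of whose kernels of
differentials are flat (equivalently, a pure acyclic complex of flat functors). -/
def IsFlatComplex (J : G) (X : CochainComplex (D ⥤ G) ℤ) : Prop :=
  (∀ n, X.ExactAt n) ∧ (∀ n, IsFlat J (X.X n)) ∧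
    ∀ n : ℤ, IsFlat J (kernel (X.d n (n + 1)))

/-- A *cotorsion complex*: an acyclic complex of cotorsion functors all of whose
kernels of differentials are cotorsion. -/
def IsCotorsionComplex (J : G) (X : CochainComplex (D ⥤ G) ℤ) : Prop :=
  (∀ n, X.ExactAt n) ∧ (∀ n, IsCotorsion J (X.X n)) ∧
    ∀ n : ℤ, IsCotorsion J (kernel (X.d n (n + 1)))

/-- A complex is *dg-cotorsion* if every short exact sequence of complexes
`0 → X → E → F → 0` with `F` a flat complex splits. -/
def IsDgCotorsion (J : G) (X : CochainComplex (D ⥤ G) ℤ) : Prop :=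
  ∀ ⦃E F : CochainComplex (D ⥤ G) ℤ⦄ (i : X ⟶ E) (p : E ⟶ F) (w : i ≫ p = 0),
    (ShortComplex.mk i p w).ShortExact → IsFlatComplex J F →
      Nonempty (ShortComplex.mk i p w).Splitting

end Complexes



section Aux

/-! ### Object-level transpose machinery -/

/-- The transpose `Y ⟶ [X,J]` of a morphism `X ⟶ [Y,J]`. -/
noncomputable def transposeHom (J : G) {X Y : G} (t : X ⟶ pObj J Y) : Y ⟶ pObj J X :=
  MonoidalClosed.curry ((β_ X Y).hom ≫ MonoidalClosed.uncurry t)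

lemma uncurry_transposeHom (J : G) {X Y : G} (t : X ⟶ pObj J Y) :
    MonoidalClosed.uncurry (transposeHom J t) = (β_ X Y).hom ≫ MonoidalClosed.uncurry t := by
  simp [transposeHom]

lemma uncurry_comp_pMap (J : G) {T X E : G} (u : T ⟶ pObj J E) (f : X ⟶ E) :
    MonoidalClosed.uncurry (u ≫ pMap J f) = (f ▷ T) ≫ MonoidalClosed.uncurry u := by
  erw [pMap, MonoidalClosed.uncurry_natural_left, MonoidalClosed.uncurry_pre,
    MonoidalClosed.uncurry_eq]
  exact whisker_exchange_assoc f u _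

@[simp] lemma transposeHom_transposeHom (J : G) {X Y : G} (t : X ⟶ pObj J Y) :
    transposeHom J (transposeHom J t) = t := by
  apply MonoidalClosed.uncurry_injective
  rw [uncurry_transposeHom, uncurry_transposeHom, ← Category.assoc,
    SymmetricCategory.symmetry, Category.id_comp]

lemma comp_transposeHom (J : G) {X Y Y' : G} (g : Y' ⟶ Y) (t : X ⟶ pObj J Y) :
    g ≫ transposeHom J t = transposeHom J (t ≫ pMap J g) := by
  apply MonoidalClosed.uncurry_injective
  erw [MonoidalClosed.uncurry_natural_left, uncurry_transposeHom, uncurry_transposeHom,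
    uncurry_comp_pMap, ← BraidedCategory.braiding_naturality_right_assoc]

lemma transposeHom_comp (J : G) {X X' Y : G} (f : X' ⟶ X) (t : X ⟶ pObj J Y) :
    transposeHom J (f ≫ t) = transposeHom J t ≫ pMap J f := by
  apply MonoidalClosed.uncurry_injective
  erw [uncurry_transposeHom, uncurry_comp_pMap, uncurry_transposeHom,
    MonoidalClosed.uncurry_natural_left, ← BraidedCategory.braiding_naturality_left_assoc]

@[simp] lemma transposeHom_zero (J : G) (X Y : G) :
    transposeHom J (0 : X ⟶ pObj J Y) = 0 := by
  apply MonoidalClosed.uncurry_injective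
  rw [uncurry_transposeHom]
  have h0 : MonoidalClosed.uncurry (0 : X ⟶ pObj J Y) = 0 := by
    erw [MonoidalClosed.uncurry_eq, MonoidalPreadditive.whiskerLeft_zero, zero_comp]
  have h0' : MonoidalClosed.uncurry (0 : Y ⟶ pObj J X) = 0 := by
    erw [MonoidalClosed.uncurry_eq, MonoidalPreadditive.whiskerLeft_zero, zero_comp]
  rw [h0, h0', comp_zero]

lemma bid_eq_transposeHom_id (J X : G) : bid J X = transposeHom J (𝟙 (pObj J X)) := by
  unfold transposeHom bid pObj
  rw [MonoidalClosed.uncurry_id_eq_ev]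

@[simp] lemma transposeHom_bid (J X : G) : transposeHom J (bid J X) = 𝟙 (pObj J X) := by
  rw [bid_eq_transposeHom_id, transposeHom_transposeHom]

lemma bid_comp_pMap_bid (J X : G) :
    bid J (pObj J X) ≫ pMap J (bid J X) = 𝟙 (pObj J X) := by
  rw [bid_eq_transposeHom_id J (pObj J X), ← transposeHom_comp]
  rw [Category.comp_id, transposeHom_bid]

lemma uncurry_zero' (J : G) (X Y : G) :
    MonoidalClosed.uncurry (0 : Y ⟶ pObj J X) = 0 := by
  erw [MonoidalClosed.uncurry_eq, MonoidalPreadditive.whiskerLeft_zero, zero_comp]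

lemma eq_zero_of_pMap_eq_zero (J : G) (hJ : IsCoseparator J) {Z X : G} (w : Z ⟶ X)
    (h : pMap J w = 0) : w = 0 := by
  apply hJ.def
  intro u
  rw [zero_comp]
  have key : MonoidalClosed.curry ((ρ_ X).hom ≫ u) ≫ pMap J w
      = MonoidalClosed.curry ((ρ_ Z).hom ≫ w ≫ u) := by
    apply MonoidalClosed.uncurry_injective
    erw [uncurry_comp_pMap, MonoidalClosed.uncurry_curry, MonoidalClosed.uncurry_curry,
      MonoidalCategory.rightUnitor_naturality_assoc]
  erw [h, comp_zero] at key
  have key2 := congrArg MonoidalClosed.uncurry key.symm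
  rw [MonoidalClosed.uncurry_curry, uncurry_zero'] at key2
  rw [← cancel_epi (ρ_ Z).hom, key2, comp_zero]

lemma bid_mono (J : G) (hJ : IsCoseparator J) (X : G) : Mono (bid J X) := by
  apply Preadditive.mono_of_cancel_zero
  intro Z g hg
  apply eq_zero_of_pMap_eq_zero J hJ
  have h1 : transposeHom J (g ≫ bid J X) = transposeHom J (bid J X) ≫ pMap J g :=
    transposeHom_comp J g (bid J X)
  rw [hg, transposeHom_zero, transposeHom_bid, Category.id_comp] at h1
  exact h1.symm

lemma pMap_mono (J : G) {E Y : G} (p : E ⟶ Y) [Epi p] : Mono (pMap J p) := by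
  apply Preadditive.mono_of_cancel_zero
  intro T u hu
  have h1 : p ≫ transposeHom J u = 0 := by
    rw [comp_transposeHom, hu, transposeHom_zero]
  have h2 : transposeHom J u = 0 := zero_of_epi_comp p h1
  rw [← transposeHom_transposeHom J u, h2, transposeHom_zero]

/-- `[-,J]` sends cokernels to kernels. -/
noncomputable def pMapIsKernel (J : G) {X E Y : G} (f : X ⟶ E) (p : E ⟶ Y) [Epi p]
    (w : f ≫ p = 0) (hp : IsColimit (CokernelCofork.ofπ p w)) :
    IsLimit (KernelFork.ofι (pMap J p)
      (show pMap J p ≫ pMap J f = 0 by rw [← pMap_comp, w, pMap_zero])) := by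
  have := pMap_mono J p
  refine KernelFork.IsLimit.ofι' _ _ (fun {A} k hk => ?_)
  have h1 : f ≫ transposeHom J k = 0 := by
    rw [comp_transposeHom, hk, transposeHom_zero]
  obtain ⟨d, hd⟩ := CokernelCofork.IsColimit.desc' hp (transposeHom J k) h1
  refine ⟨transposeHom J d, ?_⟩
  rw [← transposeHom_comp]
  simp only [Cofork.π_ofπ] at hd
  rw [hd, transposeHom_transposeHom]

/-! ### Functor-level transpose machinery -/

variable {D : Type v} [SmallCategory D]

/-- Functor-level transpose, one direction. -/
@[simps] noncomputable def trans1 (J : G) {X : D ⥤ G} {Y : Dᵒᵖ ⥤ G}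
    (η : X ⟶ opOp D ⋙ dObj J Y) : Y ⟶ dObj J X where
  app c := transposeHom J (η.app c.unop)
  naturality c₁ c₂ f := by
    erw [comp_transposeHom, ← transposeHom_comp]
    congr 1
    exact (η.naturality f.unop).symm

/-- Functor-level transpose, other direction. -/
@[simps] noncomputable def trans2 (J : G) {X : D ⥤ G} {Y : Dᵒᵖ ⥤ G}
    (θ : Y ⟶ dObj J X) : X ⟶ opOp D ⋙ dObj J Y where
  app c := transposeHom J (θ.app (Opposite.op c))
  naturality c₁ c₂ f := by
    erw [comp_transposeHom, ← transposeHom_comp]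
    congr 1
    exact (θ.naturality f.op).symm

lemma trans2_trans1 (J : G) {X : D ⥤ G} {Y : Dᵒᵖ ⥤ G} (η : X ⟶ opOp D ⋙ dObj J Y) :
    trans2 J (trans1 J η) = η := by
  ext c
  simp
  exact transposeHom_transposeHom J _

lemma comp_trans2 (J : G) {K E : D ⥤ G} {Y : Dᵒᵖ ⥤ G} (i : K ⟶ E) (θ : Y ⟶ dObj J E) :
    i ≫ trans2 J θ = trans2 J (θ ≫ dMap J i) := by
  ext c
  simp [comp_transposeHom]
  exact comp_transposeHom J _ _

/-- The section of `(φ_F)⁺`. -/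
noncomputable def sPhi (J : G) (F : D ⥤ G) : dObj J F ⟶ dObj J (ddObj J F) :=
  trans1 J (X := ddObj J F) (Y := dObj J F) (𝟙 (ddObj J F))

lemma sPhi_comp_dMap_phi (J : G) (F : D ⥤ G) :
    sPhi J F ≫ dMap J (phi J F) = 𝟙 (dObj J F) := by
  ext c
  have : transposeHom J (𝟙 (pObj J (pObj J (F.obj c.unop)))) ≫
      pMap J (bid J (F.obj c.unop)) = 𝟙 (pObj J (F.obj c.unop)) := by
    rw [← bid_eq_transposeHom_id, bid_comp_pMap_bid]
  exact this

/-- `(-)⁺` sends cokernels to kernels, functor level. -/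
noncomputable def dMapIsKernel (J : G) {F₁ F₂ F₃ : D ⥤ G} (η : F₁ ⟶ F₂) (q : F₂ ⟶ F₃)
    [Epi q] (w : η ≫ q = 0) (hp : IsColimit (CokernelCofork.ofπ q w)) :
    IsLimit (KernelFork.ofι (dMap J q)
      (show dMap J q ≫ dMap J η = 0 by rw [← dMap_comp, w, dMap_zero])) := by
  apply evaluationJointlyReflectsLimits
  intro k
  have hpk : IsColimit (CokernelCofork.ofπ (q.app k.unop)
      (show η.app k.unop ≫ q.app k.unop = 0 by
        rw [← NatTrans.comp_app, w]; rfl)) :=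
    isColimitCoforkMapOfIsColimit' ((evaluation D G).obj k.unop) w hp
  have hk := pMapIsKernel J (η.app k.unop) (q.app k.unop) _ hpk
  exact (isLimitMapConeForkEquiv' ((evaluation Dᵒᵖ G).obj k) _).symm hk

end Aux

section Statement

variable {C : Type v} [SmallCategory C]
variable [HasLimits G] [HasColimits G] [AB5 G] [HasSeparator G]


/-- For every functor `F` in `A = Fun(C, G)`, the canonical morphism `φ_F : F ⟶ F⁺⁺` is a
pure monomorphism and `F⁺⁺` is pure injective; consequently, every functor in `A` has a
pure injective preenvelope. -/
theorem statement0 (J : G) [Injective J] (hJ : IsCoseparator J) :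
    (∀ F : C ⥤ G,
      (Mono (phi J F) ∧
        IsPure J (ShortComplex.mk (phi J F) (cokernel.π (phi J F))
          (cokernel.condition (phi J F)))) ∧
      IsPureInjective J (ddObj J F)) ∧
    (∀ F : C ⥤ G, ∃ (P : C ⥤ G) (u : F ⟶ P), IsPureInjective J P ∧
      ∀ (Q : C ⥤ G), IsPureInjective J Q → ∀ v : F ⟶ Q, ∃ w : P ⟶ Q, u ≫ w = v) := by
  have main : ∀ F : C ⥤ G,
      (Mono (phi J F) ∧
        IsPure J (ShortComplex.mk (phi J F) (cokernel.π (phi J F))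
          (cokernel.condition (phi J F)))) ∧
      IsPureInjective J (ddObj J F) := by
    intro F
    have hmono : Mono (phi J F) := by
      have : ∀ c, Mono ((phi J F).app c) := fun c => bid_mono J hJ (F.obj c)
      exact NatTrans.mono_of_mono_app _
    refine ⟨⟨hmono, ?_⟩, ?_⟩
    · -- purity of 0 → F → F⁺⁺ → coker → 0
      have hker := dMapIsKernel J (phi J F) (cokernel.π (phi J F))
        (cokernel.condition _) (cokernelIsCokernel _)
      have hexact : (dSC J (ShortComplex.mk (phi J F) (cokernel.π (phi J F))
          (cokernel.condition (phi J F)))).Exact :=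
        ShortComplex.exact_of_f_is_kernel _ hker
      have hmonof : Mono (dSC J (ShortComplex.mk (phi J F) (cokernel.π (phi J F))
          (cokernel.condition (phi J F)))).f := by
        have : ∀ c, Mono ((dSC J (ShortComplex.mk (phi J F) (cokernel.π (phi J F))
            (cokernel.condition (phi J F)))).f.app c) := fun c => by
          have : Epi ((cokernel.π (phi J F)).app c.unop) := inferInstance
          exact pMap_mono J ((cokernel.π (phi J F)).app c.unop)
        exact NatTrans.mono_of_mono_app _
      exact ⟨ShortComplex.Splitting.ofExactOfSection _ hexact (sPhi J F)
        (sPhi_comp_dMap_phi J F) hmonof⟩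
    · -- pure injectivity of F⁺⁺
      intro K E L i p w hse hpure f
      obtain ⟨σ⟩ := hpure
      refine ⟨trans2 J (trans1 J f ≫ σ.s), ?_⟩
      have hsg : σ.s ≫ dMap J i = 𝟙 (dObj J K) := σ.s_g
      erw [comp_trans2, Category.assoc, hsg, Category.comp_id, trans2_trans1]
  refine ⟨main, fun F => ⟨ddObj J F, phi J F, (main F).2, ?_⟩⟩
  intro Q hQ v
  have hse : (ShortComplex.mk (phi J F) (cokernel.π (phi J F))
      (cokernel.condition (phi J F))).ShortExact :=
    { exact := ShortComplex.exact_of_g_is_cokernel _ (cokernelIsCokernel _)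
      mono_f := (main F).1.1
      epi_g := by dsimp; infer_instance }
  exact hQ (phi J F) (cokernel.π (phi J F)) (cokernel.condition (phi J F))
    hse (main F).1.2 v


end Statement

end FlatFunctorsPaper
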